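/- Let d be a positive integer, let ℓ be a prime with ℓ² | d, and let a ∈ ℤ/dℤ be an element whose representative ã ∈ {0,…,d−1} is not divisible by ℓ. Then Σ_{k=0}^{ℓ−1} ⟨(1 + k·(d/ℓ))·a / d⟩ = ⟨ā/(d/ℓ)⟩ + (ℓ−1)/2, where the products (1 + k·(d/ℓ))·a are computed in ℤ/dℤ, ā denotes the image of a in ℤ/(d/ℓ)ℤ, and ⟨c/m⟩ denotes ĉ/m with ĉ ∈ {0,…,m−1} the representative of c ∈ ℤ/mℤ. Moreover the set {1 + k·(d/ℓ) : 0 ≤ k < ℓ} is exactly the cyclic subgroup of (ℤ/dℤ)^× generated by 1 + d/ℓ. -/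

import Mathlib

open scoped BigOperators

/-- If `ℓ² ∣ d` and `a ∈ ℤ/dℤ` has representative not divisible by `ℓ`,
then `Σ_{k=0}^{ℓ-1} ⟨(1 + k·(d/ℓ))·a/d⟩ = ⟨ā/(d/ℓ)⟩ + (ℓ-1)/2`, and the set
`{1 + k·(d/ℓ) : 0 ≤ k < ℓ}` is the cyclic subgroup of `(ℤ/dℤ)ˣ` generated by `1 + d/ℓ`. -/
theorem fractional_part_sum_level_lowering (d ℓ : ℕ) (hd : 0 < d) (hℓ : ℓ.Prime)
    (hℓ2 : ℓ ^ 2 ∣ d) (a : ZMod d) (ha : ¬ ℓ ∣ a.val) :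
    (∑ k ∈ Finset.range ℓ,
        ((((1 + (k : ZMod d) * ((d / ℓ : ℕ) : ZMod d)) * a).val : ℚ) / d)
      = (((ZMod.cast a : ZMod (d / ℓ)).val : ℚ) / (d / ℓ : ℕ) + (ℓ - 1) / 2)) ∧
    ∃ u : (ZMod d)ˣ, (u : ZMod d) = 1 + ((d / ℓ : ℕ) : ZMod d) ∧
      (((↑) : (ZMod d)ˣ → ZMod d) '' (Subgroup.zpowers u : Set (ZMod d)ˣ))
        = {x : ZMod d | ∃ k : ℕ, k < ℓ ∧ x = 1 + (k : ZMod d) * ((d / ℓ : ℕ) : ZMod d)} := by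
  haveI : NeZero d := ⟨hd.ne'⟩
  set m := d / ℓ with hm
  have hℓd : ℓ ∣ d := dvd_trans (dvd_pow_self ℓ two_ne_zero) hℓ2
  have hdm : d = ℓ * m := (Nat.mul_div_cancel' hℓd).symm
  have hℓm : ℓ ∣ m := by
    obtain ⟨t, ht⟩ := hℓ2
    exact ⟨t, by rw [hm, ht, pow_two, mul_assoc, Nat.mul_div_cancel_left _ hℓ.pos]⟩
  have hm0 : 0 < m := by
    rcases Nat.eq_zero_or_pos m with h | h
    · rw [hdm, h, mul_zero] at hd; exact absurd hd (lt_irrefl 0)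
    · exact h
  haveI : NeZero m := ⟨hm0.ne'⟩
  have hm2 : ((m : ZMod d)) * (m : ZMod d) = 0 := by
    have hdvd : d ∣ m * m := by
      obtain ⟨s, hs⟩ := hℓm
      exact ⟨s, by rw [hdm, hs]; ring⟩
    rw [← Nat.cast_mul]
    exact (ZMod.natCast_eq_zero_iff _ _).mpr hdvd
  have hℓm0 : ((ℓ : ZMod d)) * (m : ZMod d) = 0 := by
    rw [← Nat.cast_mul, ← hdm]; exact ZMod.natCast_self d
  -- the unit
  have hcop : Nat.Coprime (1 + m) d := by
    rw [hdm]
    refine Nat.Coprime.mul_right ?_ ?_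
    · rw [Nat.coprime_comm, hℓ.coprime_iff_not_dvd]
      intro h
      have h1 : ℓ ∣ 1 := (Nat.dvd_add_right hℓm).mp (by rwa [add_comm] at h)
      exact hℓ.one_lt.ne' (Nat.dvd_one.mp h1)
    · simp [Nat.coprime_comm]
  set u : (ZMod d)ˣ := ZMod.unitOfCoprime (1 + m) hcop with hu_def
  have hu : (u : ZMod d) = 1 + (m : ZMod d) := by
    rw [hu_def, ZMod.coe_unitOfCoprime]; push_cast; ring
  have hpow : ∀ k : ℕ, ((u : ZMod d)) ^ k = 1 + (k : ZMod d) * (m : ZMod d) := by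
    intro k
    induction k with
    | zero => simp
    | succ k ih =>
      rw [pow_succ, ih, hu]
      push_cast
      linear_combination (k : ZMod d) * hm2
  have huℓ : u ^ ℓ = 1 := by
    ext
    rw [Units.val_pow_eq_pow_val, hpow ℓ, Units.val_one]
    linear_combination hℓm0
  -- sum setup
  set A := a.val with hA_def
  set q := A / m with hq_def
  set r := A % m with hr_def
  have hr_lt : r < m := Nat.mod_lt _ hm0
  have hsummand : ∀ k : ℕ, ((1 + (k : ZMod d) * ((m : ℕ) : ZMod d)) * a).val
      = r + m * ((q + k * A) % ℓ) := by
    intro k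
    have haA : ((A : ℕ) : ZMod d) = a := by rw [hA_def, ZMod.natCast_val, ZMod.cast_id]
    have h1 : (1 + (k : ZMod d) * (m : ZMod d)) * a = (((1 + k * m) * A : ℕ) : ZMod d) := by
      rw [← haA]; push_cast; ring
    rw [h1, ZMod.val_natCast]
    have h2z : (m : ℤ) * q + r = A := by exact_mod_cast Nat.div_add_mod A m
    have h3z : (ℓ : ℤ) * ((q + k * A) / ℓ) + ((q + k * A) % ℓ : ℕ) = (q + k * A : ℕ) := by
      exact_mod_cast Nat.div_add_mod (q + k * A) ℓ
    have e1 : (1 + k * m) * A = r + m * ((q + k * A) % ℓ) + d * ((q + k * A) / ℓ) := by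
      rw [hdm]
      zify
      push_cast at h3z ⊢
      linear_combination (-1 : ℤ) * h2z - (m : ℤ) * h3z
    rw [e1, Nat.add_mul_mod_self_left, Nat.mod_eq_of_lt]
    have hmod : (q + k * A) % ℓ < ℓ := Nat.mod_lt _ hℓ.pos
    rw [hdm]
    nlinarith [hr_lt, hmod]
  -- the bijection k ↦ (q + k*A) % ℓ on range ℓ
  haveI : Fact ℓ.Prime := ⟨hℓ⟩
  have hA0 : (A : ZMod ℓ) ≠ 0 := by
    rw [Ne, ZMod.natCast_eq_zero_iff]; exact ha
  have hginj : ∀ x ∈ Finset.range ℓ, ∀ y ∈ Finset.range ℓ,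
      (q + x * A) % ℓ = (q + y * A) % ℓ → x = y := by
    intro x hx y hy hxy
    rw [Finset.mem_range] at hx hy
    have h1 : ((q + x * A : ℕ) : ZMod ℓ) = ((q + y * A : ℕ) : ZMod ℓ) :=
      (ZMod.natCast_eq_natCast_iff' _ _ _).mpr (by simpa using hxy)
    push_cast at h1
    have h2 : (x : ZMod ℓ) * A = (y : ZMod ℓ) * A := by linear_combination h1
    have h3 : (x : ZMod ℓ) = y := mul_right_cancel₀ hA0 h2
    have h4 := (ZMod.natCast_eq_natCast_iff' x y ℓ).mp h3
    rwa [Nat.mod_eq_of_lt hx, Nat.mod_eq_of_lt hy] at h4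
  have himg : Finset.image (fun k => (q + k * A) % ℓ) (Finset.range ℓ) = Finset.range ℓ := by
    apply Finset.eq_of_subset_of_card_le
    · intro j hj
      rw [Finset.mem_image] at hj
      obtain ⟨k, _, rfl⟩ := hj
      exact Finset.mem_range.mpr (Nat.mod_lt _ hℓ.pos)
    · rw [Finset.card_image_of_injOn (fun x hx y hy h => hginj x (by simpa using hx) y
        (by simpa using hy) h)]
  have hgsum : ∑ k ∈ Finset.range ℓ, (q + k * A) % ℓ = ∑ j ∈ Finset.range ℓ, j := by
    conv_rhs => rw [← himg]
    rw [Finset.sum_image hginj]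
  constructor
  · -- the sum identity
    have hrval : ((ZMod.cast a : ZMod m).val) = r := by
      have h1 : (ZMod.cast a : ZMod m) = ((A : ℕ) : ZMod m) := (ZMod.natCast_val a).symm
      rw [h1, ZMod.val_natCast]
    rw [hrval]
    have hsum_nat : ∑ k ∈ Finset.range ℓ, (r + m * ((q + k * A) % ℓ))
        = ℓ * r + m * ∑ j ∈ Finset.range ℓ, j := by
      rw [Finset.sum_add_distrib, Finset.sum_const, Finset.card_range, ← Finset.mul_sum,
        hgsum, smul_eq_mul]
    calc ∑ k ∈ Finset.range ℓ, (((1 + (k : ZMod d) * ((m : ℕ) : ZMod d)) * a).val : ℚ) / d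
        = ∑ k ∈ Finset.range ℓ, ((r + m * ((q + k * A) % ℓ) : ℕ) : ℚ) / d := by
          refine Finset.sum_congr rfl fun k _ => ?_
          rw [hsummand k]
      _ = ((∑ k ∈ Finset.range ℓ, (r + m * ((q + k * A) % ℓ)) : ℕ) : ℚ) / d := by
          rw [Nat.cast_sum, Finset.sum_div]
      _ = ((ℓ * r + m * ∑ j ∈ Finset.range ℓ, j : ℕ) : ℚ) / d := by rw [hsum_nat]
      _ = (r : ℚ) / m + ((ℓ : ℚ) - 1) / 2 := by
          have hS : (∑ x ∈ Finset.range ℓ, (x : ℚ)) * 2 = (ℓ : ℚ) * ((ℓ : ℚ) - 1) := by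
            have h := congrArg (Nat.cast : ℕ → ℚ) (Finset.sum_range_id_mul_two ℓ)
            push_cast [Nat.cast_sub hℓ.one_lt.le] at h
            linarith [h]
          rw [hdm]
          push_cast
          have hm0' : (m : ℚ) ≠ 0 := Nat.cast_ne_zero.mpr hm0.ne'
          have hℓ0' : (ℓ : ℚ) ≠ 0 := Nat.cast_ne_zero.mpr hℓ.pos.ne'
          field_simp
          linear_combination (m : ℚ) * hS
  · -- the subgroup statement
    refine ⟨u, hu, ?_⟩
    ext x
    simp only [Set.mem_image, SetLike.mem_coe, Subgroup.mem_zpowers_iff, Set.mem_setOf_eq]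
    constructor
    · rintro ⟨g, ⟨n, rfl⟩, rfl⟩
      have hℓ0 : (0 : ℤ) < ℓ := by exact_mod_cast hℓ.pos
      refine ⟨(n % ℓ).toNat, ?_, ?_⟩
      · have h1 := Int.emod_lt_of_pos n hℓ0
        omega
      · have hmod : u ^ n = u ^ ((n % ℓ).toNat) := by
          conv_lhs => rw [← Int.mul_ediv_add_emod n ℓ]
          rw [zpow_add, zpow_mul, zpow_natCast, huℓ, one_zpow, one_mul, ← zpow_natCast,
            Int.toNat_of_nonneg (Int.emod_nonneg n hℓ0.ne')]
        rw [hmod, Units.val_pow_eq_pow_val, hpow]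
    · rintro ⟨k, hk, rfl⟩
      exact ⟨u ^ k, ⟨k, by rw [zpow_natCast]⟩,
        by rw [Units.val_pow_eq_pow_val, hpow]⟩
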